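/- The simplicial deleted join of the k-skeleton of the (2k+2)-dimensional simplex is Z_2-equivariantly homeomorphic to the sphere S^{2k+1} with the antipodal involution. -/

import Mathlib

/- Common infrastructure: spheres with antipodal involution, deleted products,
topological joins and suspensions with induced involutions, abstract simplicial
complexes (as down-closed set systems), geometric realizations, simplicial joins,
deleted joins, cones, skeleta and links. -/

open Metric

noncomputable section

/-- The unit sphere `S^{m-1}` inside `ℝ^m`. -/
def unitSphere (m : ℕ) : Set (EuclideanSpace ℝ (Fin m)) := sphere 0 1

/-- The antipodal involution on the unit sphere. -/
def sphNeg {m : ℕ} (x : unitSphere m) : unitSphere m :=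
  ⟨-x.1, by have h := x.2; simp only [unitSphere, mem_sphere_zero_iff_norm] at h ⊢; simp [h]⟩

/-- The deleted product `X^{×2}_Δ = {(x,y) : x ≠ y}`. -/
abbrev DelProd (X : Type*) [TopologicalSpace X] := {p : X × X // p.1 ≠ p.2}

/-- The coordinate-swapping involution on the deleted product. -/
def delProdSwap {X : Type*} [TopologicalSpace X] (p : DelProd X) : DelProd X :=
  ⟨(p.1.2, p.1.1), Ne.symm p.2⟩

abbrev I01 := unitInterval

/-- Generating relation for the topological join `X * Y`. -/
def JoinRel (X Y : Type*) : X × Y × I01 → X × Y × I01 → Prop := fun a b =>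
  (a.2.2 = 0 ∧ b.2.2 = 0 ∧ a.1 = b.1) ∨ (a.2.2 = 1 ∧ b.2.2 = 1 ∧ a.2.1 = b.2.1)

/-- The topological join `X * Y`; at `t = 0` it is `X`, at `t = 1` it is `Y`. -/
def TopJoin (X Y : Type*) := Quot (JoinRel X Y)

instance (X Y : Type*) [TopologicalSpace X] [TopologicalSpace Y] :
    TopologicalSpace (TopJoin X Y) := by unfold TopJoin; infer_instance

/-- Generating relation for the unreduced suspension. -/
def SuspRel (X : Type*) : X × I01 → X × I01 → Prop := fun a b =>
  (a.2 = 0 ∧ b.2 = 0) ∨ (a.2 = 1 ∧ b.2 = 1)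

/-- The unreduced suspension `Σ X`. -/
def Susp (X : Type*) := Quot (SuspRel X)

instance (X : Type*) [TopologicalSpace X] : TopologicalSpace (Susp X) := by
  unfold Susp; infer_instance

/-- The involution on a join induced by involutions of the two factors. -/
def joinInvol {X Y : Type*} (τ : X → X) (σ : Y → Y) : TopJoin X Y → TopJoin X Y :=
  Quot.lift (fun a => Quot.mk _ (τ a.1, σ a.2.1, a.2.2)) (by
    rintro a b (⟨h0a, h0b, hx⟩ | ⟨h1a, h1b, hy⟩)
    · exact Quot.sound (Or.inl ⟨h0a, h0b, by rw [hx]⟩)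
    · exact Quot.sound (Or.inr ⟨h1a, h1b, by rw [hy]⟩))

/-- The involution on the suspension induced by `τ` together with the flip of the
suspension coordinate. -/
def suspInvol {X : Type*} (τ : X → X) : Susp X → Susp X :=
  Quot.lift (fun a => Quot.mk _ (τ a.1, unitInterval.symm a.2)) (by
    rintro a b (⟨ha, hb⟩ | ⟨ha, hb⟩)
    · exact Quot.sound (Or.inr ⟨by simp [ha], by simp [hb]⟩)
    · exact Quot.sound (Or.inl ⟨by simp [ha], by simp [hb]⟩))

/-- `K` is an abstract simplicial complex: a set of nonempty finite vertex sets
closed under passing to nonempty subsets. -/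
def IsComplex {V : Type*} (K : Set (Finset V)) : Prop :=
  (∀ σ ∈ K, σ.Nonempty) ∧ ∀ σ ∈ K, ∀ τ ⊆ σ, τ.Nonempty → τ ∈ K

/-- Geometric realization of a set system `K` on a finite vertex set `V`, as the
subspace of barycentric-coordinate functions supported on a face of `K`. -/
def realization {V : Type*} [Fintype V] (K : Set (Finset V)) : Set (V → ℝ) :=
  {x | (∀ v, 0 ≤ x v) ∧ ∑ v, x v = 1 ∧ ∃ σ ∈ K, ∀ v, x v ≠ 0 → v ∈ σ}

/-- `X` admits a topological embedding into `ℝ^d`. -/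
def EmbedsIn (X : Type*) [TopologicalSpace X] (d : ℕ) : Prop :=
  ∃ f : X → EuclideanSpace ℝ (Fin d), Topology.IsEmbedding f

/-- Simplicial join of complexes on disjoint vertex sets. -/
def sJoin {V W : Type*} [DecidableEq V] [DecidableEq W] (K : Set (Finset V))
    (L : Set (Finset W)) : Set (Finset (V ⊕ W)) :=
  {s | s.Nonempty ∧ ∃ σ τ, (σ ∈ K ∨ σ = ∅) ∧ (τ ∈ L ∨ τ = ∅) ∧
    s = σ.image Sum.inl ∪ τ.image Sum.inr}

/-- Simplicial deleted join: joins `σ * τ` of pairs of disjoint simplices. -/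
def delJoin {V : Type*} [DecidableEq V] (K : Set (Finset V)) : Set (Finset (V ⊕ V)) :=
  {s | s.Nonempty ∧ ∃ σ τ, (σ ∈ K ∨ σ = ∅) ∧ (τ ∈ K ∨ τ = ∅) ∧ Disjoint σ τ ∧
    s = σ.image Sum.inl ∪ τ.image Sum.inr}

/-- The `k`-skeleton of the simplex on `n` vertices. -/
def skel (n k : ℕ) : Set (Finset (Fin n)) := {σ | σ.Nonempty ∧ σ.card ≤ k + 1}

/-- The cone over `K`, with apex the vertex `none`. -/
def coneC {V : Type*} [DecidableEq V] (K : Set (Finset V)) : Set (Finset (Option V)) :=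
  {s | s.Nonempty ∧ ∃ σ, (σ ∈ K ∨ σ = ∅) ∧ (s = σ.image some ∨ s = insert none (σ.image some))}

/-- Barycentric coordinates of the cone apex. -/
def apexFun (V : Type*) : Option V → ℝ := fun o => o.elim 1 (fun _ => 0)

/-- The link of a vertex `v` in a complex `P`. -/
def link {V : Type*} [DecidableEq V] (P : Set (Finset V)) (v : V) : Set (Finset V) :=
  {σ | σ ∈ P ∧ v ∉ σ ∧ insert v σ ∈ P}

/-- The three-point complex `[3]`. -/
def pts3 : Set (Finset (Fin 3)) := {s | ∃ i, s = {i}}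

/-- The point `[x, y, t]` of the realization of a simplicial join. -/
def jpt {V W : Type*} (x : V → ℝ) (y : W → ℝ) (t : I01) : V ⊕ W → ℝ :=
  Sum.elim (fun v => (1 - (t : ℝ)) * x v) (fun w => (t : ℝ) * y w)

namespace Stmt7Aux
open Finset

def ι (k : ℕ) (j : Fin (2*k+2)) : Fin (2*k+3) := ⟨j.1, by omega⟩
def lastI (k : ℕ) : Fin (2*k+3) := ⟨2*k+2, by omega⟩

def dvec (k : ℕ) (x : Fin (2*k+3) ⊕ Fin (2*k+3) → ℝ) : Fin (2*k+3) → ℝ :=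
  fun i => x (Sum.inl i) - x (Sum.inr i)

def zmap (k : ℕ) (x : Fin (2*k+3) ⊕ Fin (2*k+3) → ℝ) : EuclideanSpace ℝ (Fin (2*k+2)) :=
  WithLp.toLp 2 (fun j => dvec k x (ι k j) - dvec k x (lastI k))

lemma compl_card {k : ℕ} (p : Fin (2*k+3) → Prop) [DecidablePred p]
    (h : (univ.filter p).card ≤ k+1) :
    k+2 ≤ (univ.filter (fun i => ¬ p i)).card := by
  have h2 := Finset.card_filter_add_card_filter_not (s := (univ : Finset (Fin (2*k+3)))) p
  have h3 : (univ : Finset (Fin (2*k+3))).card = 2*k+3 := by simp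
  omega

lemma c_eq_zero {k : ℕ} {d d' : Fin (2*k+3) → ℝ} {t c : ℝ} (ht : 0 < t)
    (hdp : (univ.filter (fun i => 0 < d i)).card ≤ k+1)
    (hdn : (univ.filter (fun i => d i < 0)).card ≤ k+1)
    (hdp' : (univ.filter (fun i => 0 < d' i)).card ≤ k+1)
    (hdn' : (univ.filter (fun i => d' i < 0)).card ≤ k+1)
    (h : ∀ i, d' i = t * d i + c) : c = 0 := by
  rcases lt_trichotomy c 0 with hc | hc | hc
  · exfalso
    have hsub : univ.filter (fun i => ¬ (0 < d i)) ⊆ univ.filter (fun i => d' i < 0) := by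
      intro i hi
      simp only [mem_filter, mem_univ, true_and, not_lt] at hi ⊢
      rw [h i]; nlinarith
    have h1 := compl_card _ hdp
    have h4 := Finset.card_le_card hsub
    omega
  · exact hc
  · exfalso
    have hsub : univ.filter (fun i => ¬ (d i < 0)) ⊆ univ.filter (fun i => 0 < d' i) := by
      intro i hi
      simp only [mem_filter, mem_univ, true_and, not_lt] at hi ⊢
      rw [h i]; nlinarith
    have h1 := compl_card _ hdn
    have h4 := Finset.card_le_card hsub
    omega

lemma exists_median (k : ℕ) (u : Fin (2*k+3) → ℝ) :
    ∃ m : ℝ, (univ.filter (fun i => m < u i)).card ≤ k+1 ∧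
             (univ.filter (fun i => u i < m)).card ≤ k+1 := by
  classical
  set T : Finset (Fin (2*k+3)) :=
    univ.filter (fun i => k+2 ≤ (univ.filter (fun j => u j ≤ u i)).card) with hT
  have hTne : T.Nonempty := by
    obtain ⟨i0, -, hmax⟩ := Finset.exists_max_image (univ : Finset (Fin (2*k+3))) u
      ⟨⟨0, by omega⟩, mem_univ _⟩
    refine ⟨i0, ?_⟩
    simp only [hT, mem_filter, mem_univ, true_and]
    have heq : univ.filter (fun j => u j ≤ u i0) = univ :=
      Finset.filter_true_of_mem (fun j _ => hmax j (mem_univ j))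
    rw [heq]
    have : (univ : Finset (Fin (2*k+3))).card = 2*k+3 := by simp
    omega
  obtain ⟨i1, hi1T, hmin⟩ := Finset.exists_min_image T u hTne
  have hmem : k+2 ≤ (univ.filter (fun j => u j ≤ u i1)).card := by
    have := (mem_filter.mp hi1T).2
    simpa using this
  refine ⟨u i1, ?_, ?_⟩
  · have h2 := Finset.card_filter_add_card_filter_not
      (s := (univ : Finset (Fin (2*k+3)))) (fun j => u j ≤ u i1)
    have h3 : (univ.filter (fun j => ¬ u j ≤ u i1)) = univ.filter (fun j => u i1 < u j) := by
      apply Finset.filter_congr; intro j _; simp [not_le]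
    have h4 : (univ : Finset (Fin (2*k+3))).card = 2*k+3 := by simp
    rw [h3] at h2
    omega
  · by_contra hcon
    push_neg at hcon
    set B := univ.filter (fun j => u j < u i1) with hB
    have hBne : B.Nonempty := Finset.card_pos.mp (by omega)
    obtain ⟨j0, hj0B, hj0max⟩ := Finset.exists_max_image B u hBne
    have hsub : B ⊆ univ.filter (fun j => u j ≤ u j0) := by
      intro j hj
      simp only [mem_filter, mem_univ, true_and]
      exact hj0max j hj
    have hj0T : j0 ∈ T := by
      simp only [hT, mem_filter, mem_univ, true_and]
      calc k+2 ≤ B.card := by omega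
        _ ≤ _ := card_le_card hsub
    have h5 : u j0 < u i1 := by
      have := (mem_filter.mp hj0B).2
      simpa [hB] using this
    linarith [hmin j0 hj0T]

lemma real_props {k : ℕ} {x : Fin (2*k+3) ⊕ Fin (2*k+3) → ℝ}
    (hx : x ∈ realization (delJoin (skel (2*k+3) k))) :
    (∀ v, 0 ≤ x v) ∧
    (∀ i, x (Sum.inl i) = max (dvec k x i) 0 ∧ x (Sum.inr i) = max (-(dvec k x i)) 0) ∧
    (univ.filter (fun i => 0 < dvec k x i)).card ≤ k+1 ∧
    (univ.filter (fun i => dvec k x i < 0)).card ≤ k+1 ∧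
    (∑ i, |dvec k x i|) = 1 := by
  classical
  obtain ⟨hpos, hsum, s, hsK, hsupp⟩ := hx
  obtain ⟨hsne, σ, τ, hσ, hτ, hdisj, rfl⟩ := hsK
  have hinl : ∀ i, x (Sum.inl i) ≠ 0 → i ∈ σ := by
    intro i hi
    rcases Finset.mem_union.mp (hsupp _ hi) with h | h
    · obtain ⟨a, ha, hai⟩ := Finset.mem_image.mp h
      cases hai; exact ha
    · obtain ⟨a, ha, hai⟩ := Finset.mem_image.mp h
      exact absurd hai (by simp)
  have hinr : ∀ i, x (Sum.inr i) ≠ 0 → i ∈ τ := by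
    intro i hi
    rcases Finset.mem_union.mp (hsupp _ hi) with h | h
    · obtain ⟨a, ha, hai⟩ := Finset.mem_image.mp h
      exact absurd hai (by simp)
    · obtain ⟨a, ha, hai⟩ := Finset.mem_image.mp h
      cases hai; exact ha
  have hd : ∀ i, x (Sum.inl i) = 0 ∨ x (Sum.inr i) = 0 := by
    intro i
    by_contra hcc
    push_neg at hcc
    exact (Finset.disjoint_left.mp hdisj (hinl i hcc.1)) (hinr i hcc.2)
  have hσc : σ.card ≤ k+1 := by
    rcases hσ with h | rfl
    · exact h.2
    · simp
  have hτc : τ.card ≤ k+1 := by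
    rcases hτ with h | rfl
    · exact h.2
    · simp
  refine ⟨hpos, ?_, ?_, ?_, ?_⟩
  · intro i
    rcases hd i with h0 | h0
    · have hdv : dvec k x i = -(x (Sum.inr i)) := by unfold dvec; rw [h0]; ring
      constructor
      · rw [h0, hdv]
        exact (max_eq_right (by linarith [hpos (Sum.inr i)])).symm
      · rw [hdv, neg_neg]
        exact (max_eq_left (hpos _)).symm
    · have hdv : dvec k x i = x (Sum.inl i) := by unfold dvec; rw [h0]; ring
      constructor
      · rw [hdv]
        exact (max_eq_left (hpos _)).symm
      · rw [h0, hdv]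
        exact (max_eq_right (by linarith [hpos (Sum.inl i)])).symm
  · calc (univ.filter (fun i => 0 < dvec k x i)).card ≤ σ.card := by
          apply Finset.card_le_card
          intro i hi
          have hi' : 0 < dvec k x i := (mem_filter.mp hi).2
          apply hinl
          intro h0
          unfold dvec at hi'
          rw [h0] at hi'
          linarith [hpos (Sum.inr i)]
      _ ≤ k+1 := hσc
  · calc (univ.filter (fun i => dvec k x i < 0)).card ≤ τ.card := by
          apply Finset.card_le_card
          intro i hi
          have hi' : dvec k x i < 0 := (mem_filter.mp hi).2
          apply hinr
          intro h0
          unfold dvec at hi'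
          rw [h0] at hi'
          linarith [hpos (Sum.inl i)]
      _ ≤ k+1 := hτc
  · have habs : ∀ i, |dvec k x i| = x (Sum.inl i) + x (Sum.inr i) := by
      intro i
      rcases hd i with h0 | h0
      · unfold dvec
        rw [h0, zero_sub, abs_neg, abs_of_nonneg (hpos _), zero_add]
      · unfold dvec
        rw [h0, sub_zero, abs_of_nonneg (hpos _), add_zero]
    calc ∑ i, |dvec k x i| = ∑ i, (x (Sum.inl i) + x (Sum.inr i)) :=
          Finset.sum_congr rfl (fun i _ => habs i)
      _ = (∑ i, x (Sum.inl i)) + ∑ i, x (Sum.inr i) := Finset.sum_add_distrib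
      _ = ∑ v, x v := (Fintype.sum_sum_type x).symm
      _ = 1 := hsum

lemma zmap_ne_zero {k : ℕ} {x : Fin (2*k+3) ⊕ Fin (2*k+3) → ℝ}
    (hx : x ∈ realization (delJoin (skel (2*k+3) k))) : zmap k x ≠ 0 := by
  obtain ⟨hpos, hrec, hp, hn, hsum⟩ := real_props hx
  intro h0
  set c : ℝ := dvec k x (lastI k) with hc
  have hconst : ∀ i, dvec k x i = c := by
    intro i
    by_cases hi : i.1 < 2*k+2
    · have h1 : zmap k x ⟨i.1, hi⟩ = 0 := by rw [h0]; rfl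
      have h2 : ι k ⟨i.1, hi⟩ = i := rfl
      simp only [zmap, WithLp.ofLp_toLp] at h1
      rw [h2] at h1
      linarith [h1]
    · have : i = lastI k := Fin.ext (by
        have := i.2
        simp only [lastI]
        omega)
      rw [this]
  rcases lt_trichotomy c 0 with hcc | hcc | hcc
  · have : univ.filter (fun i => dvec k x i < 0) = univ := by
      apply Finset.filter_true_of_mem
      intro i _
      rw [hconst i]; exact hcc
    rw [this] at hn
    have : (univ : Finset (Fin (2*k+3))).card = 2*k+3 := by simp
    omega
  · have : ∑ i, |dvec k x i| = 0 := by
      apply Finset.sum_eq_zero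
      intro i _
      rw [hconst i, hcc, abs_zero]
    rw [this] at hsum
    norm_num at hsum
  · have : univ.filter (fun i => 0 < dvec k x i) = univ := by
      apply Finset.filter_true_of_mem
      intro i _
      rw [hconst i]; exact hcc
    rw [this] at hp
    have : (univ : Finset (Fin (2*k+3))).card = 2*k+3 := by simp
    omega

end Stmt7Aux

namespace Stmt7Aux
open Finset

lemma real_isCompact {V : Type*} [Fintype V] (K : Set (Finset V)) :
    IsCompact (realization K) := by
  classical
  have hclosed : IsClosed (realization K) := by
    have heq : realization K = ⋃ σ ∈ K,
        ({x : V → ℝ | ∀ v, 0 ≤ x v} ∩ ({x | ∑ v, x v = 1} ∩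
          {x | ∀ v, x v ≠ 0 → v ∈ σ})) := by
      ext x
      simp only [realization, Set.mem_setOf_eq, Set.mem_iUnion, Set.mem_inter_iff]
      constructor
      · rintro ⟨h1, h2, σ, hσ, h3⟩; exact ⟨σ, hσ, h1, h2, h3⟩
      · rintro ⟨σ, hσ, h1, h2, h3⟩; exact ⟨h1, h2, σ, hσ, h3⟩
    rw [heq]
    apply Set.Finite.isClosed_biUnion (Set.toFinite K)
    intro σ _
    refine IsClosed.inter ?_ (IsClosed.inter ?_ ?_)
    · have : {x : V → ℝ | ∀ v, 0 ≤ x v} = ⋂ v, {x : V → ℝ | 0 ≤ x v} := by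
        ext x; simp [Set.mem_iInter]
      rw [this]
      exact isClosed_iInter fun v => isClosed_le continuous_const (continuous_apply v)
    · exact isClosed_eq (continuous_finset_sum _ fun v _ => continuous_apply v) continuous_const
    · have : {x : V → ℝ | ∀ v, x v ≠ 0 → v ∈ σ} = ⋂ v, {x : V → ℝ | x v ≠ 0 → v ∈ σ} := by
        ext x; simp [Set.mem_iInter]
      rw [this]
      apply isClosed_iInter
      intro v
      by_cases hv : v ∈ σ
      · have : {x : V → ℝ | x v ≠ 0 → v ∈ σ} = Set.univ := by ext x; simp [hv]
        rw [this]; exact isClosed_univ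
      · have : {x : V → ℝ | x v ≠ 0 → v ∈ σ} = {x | x v = 0} := by ext x; simp [hv]
        rw [this]; exact isClosed_eq (continuous_apply v) continuous_const
  apply IsCompact.of_isClosed_subset
    (isCompact_univ_pi (fun _ : V => isCompact_Icc (a := (0:ℝ)) (b := 1))) hclosed
  intro x hx
  obtain ⟨h1, h2, -⟩ := hx
  intro v _
  refine ⟨h1 v, ?_⟩
  rw [← h2]
  exact Finset.single_le_sum (fun i _ => h1 i) (mem_univ v)

def fwd (k : ℕ) (x : ↥(realization (delJoin (skel (2*k+3) k)))) : ↥(unitSphere (2*k+2)) :=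
  ⟨‖zmap k x.1‖⁻¹ • zmap k x.1, by
    have hz : zmap k x.1 ≠ 0 := zmap_ne_zero x.2
    have hn : ‖zmap k x.1‖ ≠ 0 := norm_ne_zero_iff.mpr hz
    simp only [unitSphere, mem_sphere_zero_iff_norm, norm_smul, norm_inv, norm_norm]
    exact inv_mul_cancel₀ hn⟩

lemma fwd_injective (k : ℕ) : Function.Injective (fwd k) := by
  intro x x' hEq
  obtain ⟨hpos, hrec, hp, hn, hsum⟩ := real_props x.2
  obtain ⟨hpos', hrec', hp', hn', hsum'⟩ := real_props x'.2
  have hz := zmap_ne_zero x.2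
  have hz' := zmap_ne_zero x'.2
  have hnz : (0:ℝ) < ‖zmap k x.1‖ := norm_pos_iff.mpr hz
  have hnz' : (0:ℝ) < ‖zmap k x'.1‖ := norm_pos_iff.mpr hz'
  have hval : ‖zmap k x.1‖⁻¹ • zmap k x.1 = ‖zmap k x'.1‖⁻¹ • zmap k x'.1 :=
    congrArg Subtype.val hEq
  set t : ℝ := ‖zmap k x'.1‖ * ‖zmap k x.1‖⁻¹ with htdef
  have ht : 0 < t := by positivity
  have hzz : zmap k x'.1 = t • zmap k x.1 := by
    calc zmap k x'.1 = ‖zmap k x'.1‖ • (‖zmap k x'.1‖⁻¹ • zmap k x'.1) := by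
          rw [smul_smul, mul_inv_cancel₀ (ne_of_gt hnz'), one_smul]
      _ = ‖zmap k x'.1‖ • (‖zmap k x.1‖⁻¹ • zmap k x.1) := by rw [hval]
      _ = t • zmap k x.1 := by rw [smul_smul]
  have hcoord : ∀ j : Fin (2*k+2), dvec k x'.1 (ι k j) - dvec k x'.1 (lastI k)
      = t * (dvec k x.1 (ι k j) - dvec k x.1 (lastI k)) := by
    intro j
    have h1 : zmap k x'.1 j = (t • zmap k x.1) j := by rw [hzz]
    rw [PiLp.smul_apply, smul_eq_mul] at h1
    exact h1
  set c : ℝ := dvec k x'.1 (lastI k) - t * dvec k x.1 (lastI k) with hc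
  have hall : ∀ i, dvec k x'.1 i = t * dvec k x.1 i + c := by
    intro i
    by_cases hi : i.1 < 2*k+2
    · have h1 := hcoord ⟨i.1, hi⟩
      have h2 : ι k ⟨i.1, hi⟩ = i := rfl
      rw [h2] at h1
      rw [hc]; linarith [h1]
    · have : i = lastI k := Fin.ext (by
        have := i.2
        simp only [lastI]
        omega)
      rw [this, hc]; ring
  have hc0 : c = 0 := c_eq_zero ht hp hn hp' hn' hall
  have ht1 : t = 1 := by
    have hsc : ∑ i, |dvec k x'.1 i| = t * ∑ i, |dvec k x.1 i| := by
      rw [Finset.mul_sum]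
      apply Finset.sum_congr rfl
      intro i _
      rw [hall i, hc0, add_zero, abs_mul, abs_of_pos ht]
    rw [hsum', hsum, mul_one] at hsc
    exact hsc.symm
  have hdeq : ∀ i, dvec k x'.1 i = dvec k x.1 i := by
    intro i; rw [hall i, hc0, ht1]; ring
  apply Subtype.ext
  funext v
  cases v with
  | inl i => rw [(hrec i).1, (hrec' i).1, hdeq]
  | inr i => rw [(hrec i).2, (hrec' i).2, hdeq]

end Stmt7Aux

namespace Stmt7Aux
open Finset

lemma fwd_surjective (k : ℕ) : Function.Surjective (fwd k) := by
  classical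
  rintro ⟨ζ, hζ⟩
  have hζn : ‖ζ‖ = 1 := by
    simpa [unitSphere, mem_sphere_zero_iff_norm] using hζ
  set u : Fin (2*k+3) → ℝ := fun i => if hi : i.1 < 2*k+2 then ζ ⟨i.1, hi⟩ else 0 with hu
  obtain ⟨m, hm1, hm2⟩ := exists_median k u
  set w : Fin (2*k+3) → ℝ := fun i => u i - m with hw
  have hu1 : ∀ j : Fin (2*k+2), u (ι k j) = ζ j := by
    intro j
    simp only [hu, ι]
    rw [dif_pos j.2]
  have hu2 : u (lastI k) = 0 := by
    simp only [hu, lastI]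
    rw [dif_neg (by omega)]
  have hwne : ∃ i, w i ≠ 0 := by
    by_contra hcon
    push_neg at hcon
    have hζ0 : ζ = 0 := by
      have hm0 : m = 0 := by
        have h2 := hcon (lastI k)
        simp only [hw] at h2
        rw [hu2] at h2
        linarith [sub_eq_zero.mp h2]
      ext j
      have h1 := hcon (ι k j)
      simp only [hw] at h1
      rw [hu1 j, hm0] at h1
      simpa using sub_eq_zero.mp h1
    rw [hζ0] at hζn
    simp at hζn
  set S : ℝ := ∑ i, |w i| with hS
  have hSpos : 0 < S := by
    obtain ⟨i0, hi0⟩ := hwne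
    calc (0:ℝ) < |w i0| := abs_pos.mpr hi0
      _ ≤ S := Finset.single_le_sum (f := fun i => |w i|) (fun i _ => abs_nonneg _) (mem_univ i0)
  set y : Fin (2*k+3) → ℝ := fun i => w i / S with hy
  have hypos : ∀ i, 0 < y i ↔ m < u i := by
    intro i
    rw [hy]
    constructor
    · intro h
      have h2 := mul_pos h hSpos
      rw [div_mul_cancel₀ _ (ne_of_gt hSpos)] at h2
      simp only [hw] at h2
      linarith
    · intro h
      exact div_pos (by simp only [hw]; linarith) hSpos
  have hyneg : ∀ i, y i < 0 ↔ u i < m := by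
    intro i
    rw [hy]
    constructor
    · intro h
      have h2 := mul_neg_of_neg_of_pos h hSpos
      rw [div_mul_cancel₀ _ (ne_of_gt hSpos)] at h2
      simp only [hw] at h2
      linarith
    · intro h
      exact div_neg_of_neg_of_pos (by simp only [hw]; linarith) hSpos
  set x : Fin (2*k+3) ⊕ Fin (2*k+3) → ℝ :=
    Sum.elim (fun i => max (y i) 0) (fun i => max (-(y i)) 0) with hx
  have hmemb : x ∈ realization (delJoin (skel (2*k+3) k)) := by
    refine ⟨?_, ?_, ?_⟩
    · rintro (i|i) <;> exact le_max_right _ _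
    · rw [Fintype.sum_sum_type]
      have habs : ∀ i : Fin (2*k+3), max (y i) 0 + max (-(y i)) 0 = |y i| := by
        intro i
        rcases le_or_gt 0 (y i) with h | h
        · rw [max_eq_left h, max_eq_right (by linarith), add_zero, abs_of_nonneg h]
        · rw [max_eq_right (le_of_lt h), max_eq_left (by linarith), zero_add, abs_of_neg h]
      have : (∑ i, Sum.elim (fun i => max (y i) 0) (fun i => max (-(y i)) 0) (Sum.inl i))
          + ∑ i, Sum.elim (fun i => max (y i) 0) (fun i => max (-(y i)) 0) (Sum.inr i)
          = ∑ i, |y i| := by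
        simp only [Sum.elim_inl, Sum.elim_inr]
        rw [← Finset.sum_add_distrib]
        exact Finset.sum_congr rfl (fun i _ => habs i)
      rw [hx, this]
      have : ∑ i, |y i| = (∑ i, |w i|) / S := by
        rw [Finset.sum_div]
        exact Finset.sum_congr rfl (fun i _ => by rw [hy, abs_div, abs_of_pos hSpos])
      rw [this, ← hS]
      exact div_self (ne_of_gt hSpos)
    · set σ := univ.filter (fun i => 0 < y i) with hσ
      set τ := univ.filter (fun i => y i < 0) with hτ
      refine ⟨σ.image Sum.inl ∪ τ.image Sum.inr, ⟨?_, σ, τ, ?_, ?_, ?_, rfl⟩, ?_⟩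
      · obtain ⟨i0, hi0⟩ := hwne
        have hy0 : y i0 ≠ 0 := by
          rw [hy]
          exact div_ne_zero hi0 (ne_of_gt hSpos)
        rcases lt_or_gt_of_ne hy0 with h | h
        · exact ⟨Sum.inr i0, Finset.mem_union_right _
            (Finset.mem_image_of_mem _ (mem_filter.mpr ⟨mem_univ _, h⟩))⟩
        · exact ⟨Sum.inl i0, Finset.mem_union_left _
            (Finset.mem_image_of_mem _ (mem_filter.mpr ⟨mem_univ _, h⟩))⟩
      · rcases Finset.eq_empty_or_nonempty σ with h | h
        · exact Or.inr h
        · refine Or.inl ⟨h, ?_⟩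
          have hσe : σ = univ.filter (fun i => m < u i) := by
            rw [hσ]
            exact Finset.filter_congr (fun i _ => by rw [hypos i])
          rw [hσe]
          exact hm1
      · rcases Finset.eq_empty_or_nonempty τ with h | h
        · exact Or.inr h
        · refine Or.inl ⟨h, ?_⟩
          have hτe : τ = univ.filter (fun i => u i < m) := by
            rw [hτ]
            exact Finset.filter_congr (fun i _ => by rw [hyneg i])
          rw [hτe]
          exact hm2
      · rw [Finset.disjoint_left]
        intro i hi hi2
        have h1 := (mem_filter.mp hi).2
        have h2 := (mem_filter.mp hi2).2
        linarith
      · rintro (i|i) hv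
        · have hvy : 0 < y i := by
            rcases le_or_gt (y i) 0 with h | h
            · exfalso
              apply hv
              simp only [hx, Sum.elim_inl]
              exact max_eq_right h
            · exact h
          exact Finset.mem_union_left _
            (Finset.mem_image_of_mem _ (mem_filter.mpr ⟨mem_univ _, hvy⟩))
        · have hvy : y i < 0 := by
            rcases lt_or_ge (y i) 0 with h | h
            · exact h
            · exfalso
              apply hv
              simp only [hx, Sum.elim_inr]
              exact max_eq_right (by linarith)
          exact Finset.mem_union_right _
            (Finset.mem_image_of_mem _ (mem_filter.mpr ⟨mem_univ _, hvy⟩))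
  refine ⟨⟨x, hmemb⟩, ?_⟩
  apply Subtype.ext
  show ‖zmap k x‖⁻¹ • zmap k x = ζ
  have hdv : ∀ i, dvec k x i = y i := by
    intro i
    simp only [dvec, hx, Sum.elim_inl, Sum.elim_inr]
    rcases le_or_gt 0 (y i) with h | h
    · rw [max_eq_left h, max_eq_right (by linarith)]; ring
    · rw [max_eq_right (le_of_lt h), max_eq_left (by linarith)]; ring
  have hzx : zmap k x = S⁻¹ • ζ := by
    ext j
    show dvec k x (ι k j) - dvec k x (lastI k) = (S⁻¹ • ζ) j
    rw [hdv, hdv, PiLp.smul_apply, smul_eq_mul]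
    simp only [hy, hw]
    rw [hu1 j, hu2]
    field_simp
    ring
  rw [hzx, norm_smul, hζn, mul_one, norm_inv, Real.norm_eq_abs, abs_of_pos hSpos,
    inv_inv, smul_smul, mul_inv_cancel₀ (ne_of_gt hSpos), one_smul]

lemma fwd_continuous (k : ℕ) : Continuous (fwd k) := by
  have hcoord : ∀ v : Fin (2*k+3) ⊕ Fin (2*k+3),
      Continuous (fun x : ↥(realization (delJoin (skel (2*k+3) k))) => x.1 v) :=
    fun v => (continuous_apply v).comp continuous_subtype_val
  have hz : Continuous (fun x : ↥(realization (delJoin (skel (2*k+3) k))) => zmap k x.1) := by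
    show Continuous fun x : ↥(realization (delJoin (skel (2*k+3) k))) =>
      WithLp.toLp 2 (fun j => dvec k x.1 (ι k j) - dvec k x.1 (lastI k))
    apply (PiLp.continuous_toLp _ _).comp
    apply continuous_pi
    intro j
    simp only [zmap, dvec]
    exact ((hcoord _).sub (hcoord _)).sub ((hcoord _).sub (hcoord _))
  apply Continuous.subtype_mk
  exact ((hz.norm).inv₀ (fun x => norm_ne_zero_iff.mpr (zmap_ne_zero x.2))).smul hz

end Stmt7Aux


/-- the simplicial deleted join of the `k`-skeleton of the
`(2k+2)`-simplex is `ℤ/2`-equivariantly homeomorphic to `S^{2k+1}` with the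
antipodal involution. -/
theorem stmt7 (k : ℕ) :
    ∃ h : ↥(realization (delJoin (skel (2 * k + 3) k))) ≃ₜ ↥(unitSphere (2 * k + 2)),
      ∀ x y : ↥(realization (delJoin (skel (2 * k + 3) k))),
        ((x : Fin (2 * k + 3) ⊕ Fin (2 * k + 3) → ℝ) =
          fun v => (y : Fin (2 * k + 3) ⊕ Fin (2 * k + 3) → ℝ) (Sum.swap v)) →
        (h x : EuclideanSpace ℝ (Fin (2 * k + 2))) =
          -(h y : EuclideanSpace ℝ (Fin (2 * k + 2))) := by
  classical
  haveI : CompactSpace ↥(realization (delJoin (skel (2 * k + 3) k))) :=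
    isCompact_iff_compactSpace.mp (Stmt7Aux.real_isCompact _)
  have hc : Continuous (Equiv.ofBijective (Stmt7Aux.fwd k)
      ⟨Stmt7Aux.fwd_injective k, Stmt7Aux.fwd_surjective k⟩) := Stmt7Aux.fwd_continuous k
  refine ⟨hc.homeoOfEquivCompactToT2, ?_⟩
  intro x y hxy
  show (Stmt7Aux.fwd k x : EuclideanSpace ℝ (Fin (2 * k + 2))) =
    -(Stmt7Aux.fwd k y : EuclideanSpace ℝ (Fin (2 * k + 2)))
  have hzz : Stmt7Aux.zmap k x.1 = -(Stmt7Aux.zmap k y.1) := by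
    ext j
    show Stmt7Aux.dvec k x.1 (Stmt7Aux.ι k j) - Stmt7Aux.dvec k x.1 (Stmt7Aux.lastI k)
      = (-(Stmt7Aux.zmap k y.1)) j
    rw [PiLp.neg_apply]
    have hd : ∀ i, Stmt7Aux.dvec k x.1 i = -(Stmt7Aux.dvec k y.1 i) := by
      intro i
      simp only [Stmt7Aux.dvec, hxy, Sum.swap_inl, Sum.swap_inr]
      ring
    rw [hd, hd]
    show _ = -(Stmt7Aux.dvec k y.1 (Stmt7Aux.ι k j) - Stmt7Aux.dvec k y.1 (Stmt7Aux.lastI k))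
    ring
  show ‖Stmt7Aux.zmap k x.1‖⁻¹ • Stmt7Aux.zmap k x.1 =
    -(‖Stmt7Aux.zmap k y.1‖⁻¹ • Stmt7Aux.zmap k y.1)
  rw [hzz, norm_neg, smul_neg]
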